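/- arXiv:1106.3136 — 4 statements merged into one kernel-verified Lean document; each statement's English description precedes it below -/
import Mathlib

section
/- (Finite-difference equation for the K-theoretic J-function of CP^{n−1}.) Assume in addition that (1−P)^n = 0 in R (the relation satisfied by the Hopf bundle class P in K^0(CP^{n−1})). Then (1 − T)^n J = Q · J in R[[Q]]. -/
/-- The finite-difference operator `T = P q^{Q∂_Q}` on `R[[Q]]`, multiplying the
coefficient of `Q^d` by `P q^d`. -/
noncomputable def diffOpT (R : Type*) [CommRing R] (P q : R) :
    Module.End R (PowerSeries R) where
  toFun f := PowerSeries.mk fun d => P * q ^ d * PowerSeries.coeff (R := R) d f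
  map_add' f g := by
    ext d
    simp [mul_add]
  map_smul' c f := by
    ext d
    simp [PowerSeries.coeff_mk, smul_eq_mul]
    ring

lemma diffOpT_coeff {R : Type*} [CommRing R] (P q : R) (f : PowerSeries R) (d : ℕ) :
    PowerSeries.coeff (R := R) d (diffOpT R P q f) = P * q ^ d * PowerSeries.coeff (R := R) d f := by
  simp [diffOpT]

lemma one_sub_pow_coeff {R : Type*} [CommRing R] (P q : R) (m : ℕ) (f : PowerSeries R)
    (d : ℕ) :
    PowerSeries.coeff (R := R) d (((1 - diffOpT R P q) ^ m) f) =
      (1 - P * q ^ d) ^ m * PowerSeries.coeff (R := R) d f := by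
  induction m generalizing f with
  | zero => simp
  | succ m ih =>
      rw [pow_succ, Module.End.mul_apply, ih]
      have : PowerSeries.coeff (R := R) d ((1 - diffOpT R P q) f)
          = (1 - P * q ^ d) * PowerSeries.coeff (R := R) d f := by
        simp [diffOpT_coeff, sub_mul]
      rw [this, pow_succ]; ring

/-- With `a_d = ∏_{r=1}^d (1−Pq^r)^{−n}`, `J = (1−q)·Σ_d a_d Q^d`, and
`(1−P)^n = 0` (the relation for the Hopf bundle class on `CP^{n−1}`), the K-theoretic
J-function satisfies the finite-difference equation `(1−T)^n J = Q·J`. -/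
theorem stmt2 (R : Type*) [CommRing R] (q P : R) (n : ℕ) (hn : 1 ≤ n)
    (hu : ∀ r : ℕ, 1 ≤ r → IsUnit (1 - P * q ^ r))
    (a : ℕ → R)
    (ha : ∀ d : ℕ, a d * (∏ r ∈ Finset.Icc 1 d, (1 - P * q ^ r)) ^ n = 1)
    (hP : (1 - P) ^ n = 0) :
    ((1 - diffOpT R P q) ^ n) (PowerSeries.C (R := R) (1 - q) * PowerSeries.mk a) =
      PowerSeries.X * (PowerSeries.C (R := R) (1 - q) * PowerSeries.mk a) := by
  have key : ∀ d : ℕ, (1 - P * q ^ (d + 1)) ^ n * a (d + 1) = a d := by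
    intro d
    have huP : IsUnit ((∏ r ∈ Finset.Icc 1 d, (1 - P * q ^ r)) ^ n) :=
      IsUnit.of_mul_eq_one (a d) (by rw [mul_comm]; exact ha d)
    refine huP.mul_left_cancel ?_
    have hsplit : (∏ r ∈ Finset.Icc 1 (d + 1), (1 - P * q ^ r))
        = (∏ r ∈ Finset.Icc 1 d, (1 - P * q ^ r)) * (1 - P * q ^ (d + 1)) := by
      rw [Finset.prod_Icc_succ_top (Nat.le_add_left 1 d)]
    calc (∏ r ∈ Finset.Icc 1 d, (1 - P * q ^ r)) ^ n
          * ((1 - P * q ^ (d + 1)) ^ n * a (d + 1))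
        = a (d + 1) * (∏ r ∈ Finset.Icc 1 (d + 1), (1 - P * q ^ r)) ^ n := by
          rw [hsplit, mul_pow]; ring
      _ = 1 := ha (d + 1)
      _ = a d * (∏ r ∈ Finset.Icc 1 d, (1 - P * q ^ r)) ^ n := (ha d).symm
      _ = (∏ r ∈ Finset.Icc 1 d, (1 - P * q ^ r)) ^ n * a d := by ring
  have ha0 : a 0 = 1 := by simpa using ha 0
  ext d
  rw [one_sub_pow_coeff]
  cases d with
  | zero =>
      simp [ha0, hP]
  | succ d =>
      rw [PowerSeries.coeff_succ_X_mul]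
      simp only [PowerSeries.coeff_C_mul, PowerSeries.coeff_mk]
      calc (1 - P * q ^ (d + 1)) ^ n * ((1 - q) * a (d + 1))
          = (1 - q) * ((1 - P * q ^ (d + 1)) ^ n * a (d + 1)) := by ring
        _ = (1 - q) * a d := by rw [key d]
end

section
/- Let n and k be natural numbers with n > 4, and let l_1, ..., l_k be integers with each l_j ≥ 2 and l_1² + ... + l_k² ≤ n. Then for every integer d ≥ 1: 2 + Σ_{j=1}^{k} l_j d (l_j d + 1) < n d (d+1). (Equivalently, 1 + Σ_j l_j d (l_j d + 1)/2 < n d(d+1)/2; this inequality guarantees that the coefficient of Q^d in the series I_X is a reduced rational function of q.) -/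
/-- If `n > 4`, each `l_j ≥ 2`, and `l_1² + ⋯ + l_k² ≤ n`, then for every
integer `d ≥ 1`: `2 + Σ_j l_j d (l_j d + 1) < n d (d+1)`. -/
theorem stmt7 (n k : ℕ) (hn : 4 < n) (l : Fin k → ℤ) (hl : ∀ j, 2 ≤ l j)
    (hsum : ∑ j, (l j) ^ 2 ≤ (n : ℤ)) (d : ℤ) (hd : 1 ≤ d) :
    2 + ∑ j, l j * d * (l j * d + 1) < (n : ℤ) * d * (d + 1) := by
  have hT : 2 * ∑ j, l j ≤ ∑ j, (l j) ^ 2 := by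
    rw [Finset.mul_sum]
    apply Finset.sum_le_sum
    intro j _
    nlinarith [hl j]
  have hsplit : ∑ j, l j * d * (l j * d + 1)
      = (∑ j, (l j) ^ 2) * d ^ 2 + (∑ j, l j) * d := by
    rw [Finset.sum_mul, Finset.sum_mul, ← Finset.sum_add_distrib]
    exact Finset.sum_congr rfl fun j _ => by ring
  have hn5 : (5 : ℤ) ≤ n := by exact_mod_cast hn
  rw [hsplit]
  nlinarith [mul_le_mul_of_nonneg_right hT (le_of_lt (lt_of_lt_of_le one_pos hd)),
    mul_le_mul_of_nonneg_right hsum (mul_self_nonneg d),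
    mul_le_mul_of_nonneg_right hn5 (le_trans zero_le_one hd), sq_nonneg d, hd]
end

section
/- The form Ω is antisymmetric: for all rational functions f, g ∈ ℂ(X), Ω(f,g) = −Ω(g,f). (This is the scalar version of the claim that Ω(f,g) = [Res_{q=0}+Res_{q=∞}] (f(q), g(q^{−1})) dq/q defines an antisymmetric, i.e. symplectic, bilinear form on the loop space K.) -/
/-- `Res_a(h)`: the coefficient of `(X−a)^{−1}` in the Laurent expansion of the rational
function `h` at `a` (computed via the shift `X ↦ X + a` and the Laurent-series expansion
at `0`). -/
noncomputable def ratRes (a : ℂ) (h : RatFunc ℂ) : ℂ :=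
  ((RatFunc.laurent a h : RatFunc ℂ) : LaurentSeries ℂ).coeff (-1)

/-- `h(X⁻¹)`: the image of `h` under the automorphism of `ℂ(X)` sending `X` to `X⁻¹`. -/
noncomputable def invSubst (h : RatFunc ℂ) : RatFunc ℂ :=
  RatFunc.eval (RatFunc.C : ℂ →+* RatFunc ℂ) (RatFunc.X⁻¹) h

/-- The residue at infinity: `Res_∞(h) := −Res_0(X^{−2}·h(X^{−1}))`. -/
noncomputable def ratResInf (h : RatFunc ℂ) : ℂ :=
  - ratRes 0 (RatFunc.X ^ (-2 : ℤ) * invSubst h)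

/-- `Ω(f,g) := [Res_{q=0}+Res_{q=∞}] f(q)·g(q⁻¹)·dq/q`. -/
noncomputable def OmegaForm (f g : RatFunc ℂ) : ℂ :=
  ratRes 0 (f * invSubst g * RatFunc.X⁻¹) + ratResInf (f * invSubst g * RatFunc.X⁻¹)

/-! Auxiliary: the substitution `X ↦ X⁻¹` as a ring homomorphism on `ℂ(X)`. -/

noncomputable def phiAux : Polynomial ℂ →+* RatFunc ℂ :=
  Polynomial.eval₂RingHom RatFunc.C (RatFunc.X⁻¹)

lemma eval₂_C_X_aux (q : Polynomial ℂ) :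
    Polynomial.eval₂ RatFunc.C RatFunc.X q = algebraMap (Polynomial ℂ) (RatFunc ℂ) q := by
  have : (Polynomial.eval₂RingHom RatFunc.C RatFunc.X : Polynomial ℂ →+* RatFunc ℂ)
      = algebraMap (Polynomial ℂ) (RatFunc ℂ) := by
    apply Polynomial.ringHom_ext <;> simp
  exact congrFun (congrArg (·) (congrArg DFunLike.coe this)) q

lemma phiAux_ne_zero {p : Polynomial ℂ} (hp : p ≠ 0) : phiAux p ≠ 0 := by
  have hX : (RatFunc.X : RatFunc ℂ)⁻¹ ≠ 0 := inv_ne_zero RatFunc.X_ne_zero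
  letI : Invertible ((RatFunc.X : RatFunc ℂ)⁻¹) := invertibleOfNonzero hX
  intro h
  have h2 : Polynomial.eval₂ RatFunc.C (⅟((RatFunc.X : RatFunc ℂ)⁻¹)) p.reverse = 0 := by
    rw [Polynomial.eval₂_reverse_eq_zero_iff]; exact h
  rw [invOf_eq_inv, inv_inv, eval₂_C_X_aux] at h2
  exact hp (Polynomial.reverse_eq_zero.mp
    ((map_eq_zero_iff _ (IsFractionRing.injective _ _)).mp h2))

lemma hphiAux :
    nonZeroDivisors (Polynomial ℂ) ≤ Submonoid.comap phiAux (nonZeroDivisors (RatFunc ℂ)) :=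
  fun _ hp => mem_nonZeroDivisors_iff_ne_zero.mpr
    (phiAux_ne_zero (mem_nonZeroDivisors_iff_ne_zero.mp hp))

noncomputable def sigmaAux : RatFunc ℂ →+* RatFunc ℂ := RatFunc.liftRingHom phiAux hphiAux

lemma sigmaAux_algebraMap (p : Polynomial ℂ) :
    sigmaAux (algebraMap (Polynomial ℂ) (RatFunc ℂ) p) = phiAux p := by
  have h := RatFunc.liftRingHom_apply_div phiAux hphiAux p 1
  simp only [map_one, div_one] at h
  exact h

lemma sigmaAux_X : sigmaAux RatFunc.X = RatFunc.X⁻¹ := by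
  simpa [phiAux, RatFunc.algebraMap_X] using sigmaAux_algebraMap Polynomial.X

lemma sigmaAux_sigmaAux (h : RatFunc ℂ) : sigmaAux (sigmaAux h) = h := by
  have : (sigmaAux.comp sigmaAux) = RingHom.id (RatFunc ℂ) := by
    apply IsLocalization.ringHom_ext (nonZeroDivisors (Polynomial ℂ))
    apply Polynomial.ringHom_ext
    · intro c
      simp [sigmaAux_algebraMap, phiAux, ← RatFunc.algebraMap_C]
    · simp [RatFunc.algebraMap_X, sigmaAux_X, map_inv₀, inv_inv]
  exact congrFun (congrArg DFunLike.coe this) h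

lemma invSubst_eq (h : RatFunc ℂ) : invSubst h = sigmaAux h := by
  rw [invSubst, RatFunc.eval, sigmaAux, RatFunc.liftRingHom_apply]; rfl

lemma key_aux (f g : RatFunc ℂ) :
    RatFunc.X ^ (-2 : ℤ) * invSubst (f * invSubst g * RatFunc.X⁻¹)
      = g * invSubst f * RatFunc.X⁻¹ := by
  simp only [invSubst_eq, map_mul, sigmaAux_sigmaAux, map_inv₀, sigmaAux_X, inv_inv]
  have hX : (RatFunc.X : RatFunc ℂ) ≠ 0 := RatFunc.X_ne_zero
  rw [zpow_neg, show ((2:ℤ)) = ((2:ℕ):ℤ) from rfl, zpow_natCast, pow_two, mul_inv]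
  have h1 : (RatFunc.X:RatFunc ℂ)⁻¹ * RatFunc.X = 1 := inv_mul_cancel₀ hX
  calc (RatFunc.X:RatFunc ℂ)⁻¹ * RatFunc.X⁻¹ * (sigmaAux f * g * RatFunc.X)
      = g * sigmaAux f * RatFunc.X⁻¹ * (RatFunc.X⁻¹ * RatFunc.X) := by ring
    _ = g * sigmaAux f * RatFunc.X⁻¹ := by rw [h1, mul_one]

/-- The form `Ω` is antisymmetric: `Ω(f,g) = −Ω(g,f)`. -/
theorem stmt14 (f g : RatFunc ℂ) : OmegaForm f g = - OmegaForm g f := by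
  simp only [OmegaForm, ratResInf, key_aux]
  ring
end

section
/- Both halves of the polarization are isotropic for Ω: (a) if f and g are Laurent polynomials (elements of ℂ[X, X^{−1}] ⊂ ℂ(X)), then Ω(f,g) = 0; (b) if f and g are rational functions over ℂ that are regular at X = 0 and vanish at X = ∞ (i.e., each can be written as p/r with polynomials p, r satisfying r(0) ≠ 0 and deg p < deg r), then Ω(f,g) = 0. (This is the scalar version of the claim that K_+ = K[q,q^{−1}] and K_− = {f : f(0) ≠ ∞, f(∞) = 0} are Lagrangian subspaces forming a Lagrangian polarization K = K_+ ⊕ K_−.) -/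
namespace Stmt15Aux

open Polynomial

/-- Evaluation of polynomials at `X⁻¹`, as a ring hom. -/
noncomputable def E : Polynomial ℂ →+* RatFunc ℂ :=
  Polynomial.eval₂RingHom RatFunc.C (RatFunc.X⁻¹)

lemma E_apply (q : Polynomial ℂ) :
    E q = Polynomial.eval₂ RatFunc.C (RatFunc.X⁻¹) q := rfl

lemma eval₂_C_X (q : Polynomial ℂ) :
    Polynomial.eval₂ RatFunc.C RatFunc.X q = algebraMap (Polynomial ℂ) (RatFunc ℂ) q := by
  induction q using Polynomial.induction_on' with
  | add p q hp hq => simp [hp, hq, Polynomial.eval₂_add]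
  | monomial n a =>
      rw [← Polynomial.C_mul_X_pow_eq_monomial]
      simp [RatFunc.algebraMap_C, RatFunc.algebraMap_X]

noncomputable instance : Invertible (RatFunc.X⁻¹ : RatFunc ℂ) :=
  ⟨RatFunc.X, by rw [mul_inv_cancel₀ RatFunc.X_ne_zero],
    by rw [inv_mul_cancel₀ RatFunc.X_ne_zero]⟩

lemma E_eq (N : ℕ) (q : Polynomial ℂ) (h : q.natDegree ≤ N) :
    algebraMap (Polynomial ℂ) (RatFunc ℂ) (q.reflect N) * (RatFunc.X⁻¹ : RatFunc ℂ) ^ N = E q := by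
  have h2 := Polynomial.eval₂_reflect_mul_pow RatFunc.C (RatFunc.X⁻¹ : RatFunc ℂ) N q h
  have h3 : Polynomial.eval₂ RatFunc.C (⅟(RatFunc.X⁻¹ : RatFunc ℂ)) (q.reflect N) =
      algebraMap (Polynomial ℂ) (RatFunc ℂ) (q.reflect N) := eval₂_C_X _
  rw [h3] at h2
  exact h2

lemma E_ne_zero {q : Polynomial ℂ} (hq : q ≠ 0) : E q ≠ 0 := by
  rw [← E_eq q.natDegree q le_rfl]
  exact mul_ne_zero
    (RatFunc.algebraMap_ne_zero (by rwa [Ne, Polynomial.reflect_eq_zero_iff]))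
    (pow_ne_zero _ (inv_ne_zero RatFunc.X_ne_zero))

/-- The automorphism `X ↦ X⁻¹` of `ℂ(X)`, as a ring hom. -/
noncomputable def σ : RatFunc ℂ →+* RatFunc ℂ :=
  RatFunc.liftRingHom E (fun q hq => by
    rw [Submonoid.mem_comap]
    exact mem_nonZeroDivisors_of_ne_zero (E_ne_zero (nonZeroDivisors.ne_zero hq)))

lemma σ_div (p q : Polynomial ℂ) :
    σ (algebraMap (Polynomial ℂ) (RatFunc ℂ) p / algebraMap (Polynomial ℂ) (RatFunc ℂ) q) =
      E p / E q :=
  RatFunc.liftRingHom_apply_div _ _ _ _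

lemma σ_algebraMap (p : Polynomial ℂ) :
    σ (algebraMap (Polynomial ℂ) (RatFunc ℂ) p) = E p := by
  have := σ_div p 1
  simpa using this

lemma invSubst_eq (h : RatFunc ℂ) : invSubst h = σ h := by
  conv_rhs => rw [← RatFunc.num_div_denom h, σ_div]
  rfl

lemma σ_X : σ RatFunc.X = (RatFunc.X⁻¹ : RatFunc ℂ) := by
  conv_lhs => rw [← RatFunc.algebraMap_X, σ_algebraMap, E_apply, Polynomial.eval₂_X]

lemma σ_C (a : ℂ) : σ (RatFunc.C a) = RatFunc.C a := by
  conv_lhs => rw [← RatFunc.algebraMap_C, σ_algebraMap, E_apply, Polynomial.eval₂_C]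

lemma σ_comp_C : σ.comp (RatFunc.C : ℂ →+* RatFunc ℂ) = RatFunc.C :=
  RingHom.ext fun a => σ_C a

lemma σ_E (q : Polynomial ℂ) : σ (E q) = algebraMap (Polynomial ℂ) (RatFunc ℂ) q := by
  rw [E_apply, Polynomial.hom_eval₂, σ_comp_C, map_inv₀, σ_X, inv_inv, eval₂_C_X]

lemma σ_σ_div (p q : Polynomial ℂ) :
    σ (σ (algebraMap (Polynomial ℂ) (RatFunc ℂ) p / algebraMap (Polynomial ℂ) (RatFunc ℂ) q)) =
      algebraMap (Polynomial ℂ) (RatFunc ℂ) p / algebraMap (Polynomial ℂ) (RatFunc ℂ) q := by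
  rw [σ_div, map_div₀, σ_E, σ_E]

/-- The residue at zero, as an additive monoid hom. -/
noncomputable def resMap : RatFunc ℂ →+ ℂ where
  toFun h := (h : LaurentSeries ℂ).coeff (-1)
  map_zero' := by
    show ((0 : RatFunc ℂ) : LaurentSeries ℂ).coeff (-1) = 0
    rw [map_zero]; simp
  map_add' x y := by
    show ((x + y : RatFunc ℂ) : LaurentSeries ℂ).coeff (-1) = _
    rw [map_add]; simp

lemma resMap_apply (h : RatFunc ℂ) : resMap h = (h : LaurentSeries ℂ).coeff (-1) := rfl

noncomputable def TMap : RatFunc ℂ →+ ℂ :=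
  resMap - resMap.comp
    ((AddMonoidHom.mulLeft ((RatFunc.X : RatFunc ℂ) ^ (-2 : ℤ))).comp σ.toAddMonoidHom)

lemma TMap_apply (h : RatFunc ℂ) :
    TMap h = resMap h - resMap (RatFunc.X ^ (-2 : ℤ) * σ h) := rfl

lemma ratRes_zero (h : RatFunc ℂ) : ratRes 0 h = resMap h := by
  unfold ratRes
  rw [RatFunc.laurent_at_zero]
  rfl

lemma Omega_eq (f g : RatFunc ℂ) :
    OmegaForm f g = TMap (f * σ g * RatFunc.X⁻¹) := by
  unfold OmegaForm ratResInf
  simp only [invSubst_eq, ratRes_zero, TMap_apply]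
  ring

lemma coe_X_zpow (k : ℤ) :
    ((RatFunc.X ^ k : RatFunc ℂ) : LaurentSeries ℂ) = HahnSeries.single (k : ℤ) (1 : ℂ) := by
  rw [map_zpow₀, RatFunc.coe_X, ← RatFunc.single_zpow]

lemma coe_C' (a : ℂ) :
    ((RatFunc.C a : RatFunc ℂ) : LaurentSeries ℂ) = HahnSeries.C a := by
  have h := RatFunc.coe_coe (Polynomial.C a)
  rw [Polynomial.coe_C, PowerSeries.coe_C] at h
  rw [← RatFunc.algebraMap_C]
  exact h.symm

lemma resMap_CX (a : ℂ) (j : ℤ) :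
    resMap (RatFunc.C a * RatFunc.X ^ j) = if j = -1 then a else 0 := by
  rw [resMap_apply, map_mul, coe_C', coe_X_zpow]
  rw [HahnSeries.C_apply, HahnSeries.single_mul_single, zero_add, mul_one]
  rw [HahnSeries.coeff_single]
  by_cases h : j = -1
  · subst h; simp
  · rw [if_neg (by omega), if_neg h]

lemma σ_CX (a : ℂ) (j : ℤ) :
    σ (RatFunc.C a * RatFunc.X ^ j) = RatFunc.C a * RatFunc.X ^ (-j) := by
  rw [map_mul, σ_C, map_zpow₀, σ_X, inv_zpow, ← zpow_neg]

lemma TMap_CX (a : ℂ) (j : ℤ) : TMap (RatFunc.C a * RatFunc.X ^ j) = 0 := by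
  rw [TMap_apply, σ_CX, resMap_CX]
  have e : (RatFunc.X : RatFunc ℂ) ^ (-2 : ℤ) * (RatFunc.C a * RatFunc.X ^ (-j)) =
      RatFunc.C a * RatFunc.X ^ (-2 + -j) := by
    rw [zpow_add₀ RatFunc.X_ne_zero]; ring
  rw [e, resMap_CX]
  by_cases h : j = -1
  · subst h; norm_num
  · rw [if_neg h, if_neg (by omega), sub_zero]

lemma term_eq (a b : ℂ) (k l : ℤ) :
    RatFunc.C a * RatFunc.X ^ k * (RatFunc.C b * RatFunc.X ^ (-l)) * (RatFunc.X⁻¹ : RatFunc ℂ) =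
      RatFunc.C (a * b) * RatFunc.X ^ (k + -l + -1) := by
  rw [map_mul, zpow_add₀ RatFunc.X_ne_zero, zpow_add₀ RatFunc.X_ne_zero, zpow_neg_one]
  ring

lemma resMap_div (A B : Polynomial ℂ) (hB : B.coeff 0 ≠ 0) :
    resMap (algebraMap (Polynomial ℂ) (RatFunc ℂ) A / algebraMap (Polynomial ℂ) (RatFunc ℂ) B)
      = 0 := by
  have hBu : IsUnit (B : PowerSeries ℂ) := by
    rw [PowerSeries.isUnit_iff_constantCoeff, Polynomial.constantCoeff_coe]
    exact hB.isUnit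
  obtain ⟨u, hu⟩ := hBu
  have hc : ∀ P : Polynomial ℂ,
      ((algebraMap (Polynomial ℂ) (RatFunc ℂ) P : RatFunc ℂ) : LaurentSeries ℂ) =
        ((P : PowerSeries ℂ) : LaurentSeries ℂ) := fun P => (RatFunc.coe_coe P).symm
  have h1 : ((B : PowerSeries ℂ) : LaurentSeries ℂ) *
      (((u⁻¹ : (PowerSeries ℂ)ˣ) : PowerSeries ℂ) : LaurentSeries ℂ) = 1 := by
    rw [← PowerSeries.coe_mul, ← hu, Units.mul_inv]
    simp
  have key : ((algebraMap (Polynomial ℂ) (RatFunc ℂ) A /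
        algebraMap (Polynomial ℂ) (RatFunc ℂ) B : RatFunc ℂ) : LaurentSeries ℂ) =
      (((A : PowerSeries ℂ) * ((u⁻¹ : (PowerSeries ℂ)ˣ) : PowerSeries ℂ) :
        PowerSeries ℂ) : LaurentSeries ℂ) := by
    rw [map_div₀, hc, hc, div_eq_mul_inv, inv_eq_of_mul_eq_one_right h1,
      PowerSeries.coe_mul]
  rw [resMap_apply, key, PowerSeries.coeff_coe, if_pos (by norm_num)]

lemma sigma_form (P R : Polynomial ℂ) (hR : R.eval 0 ≠ 0) (hdeg : P.degree < R.degree) :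
    ∃ A B : Polynomial ℂ, B.coeff 0 ≠ 0 ∧
      σ (algebraMap (Polynomial ℂ) (RatFunc ℂ) P / algebraMap (Polynomial ℂ) (RatFunc ℂ) R) =
        RatFunc.X * (algebraMap (Polynomial ℂ) (RatFunc ℂ) A /
          algebraMap (Polynomial ℂ) (RatFunc ℂ) B) := by
  have hR0 : R ≠ 0 := fun h => hR (by simp [h])
  set N := R.natDegree with hN
  have hPN : P.natDegree ≤ N := by
    rcases eq_or_ne P 0 with rfl | hP
    · simp
    · exact (Polynomial.natDegree_lt_natDegree hP hdeg).le
  have hcoef : (P.reflect N).coeff 0 = 0 := by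
    rw [Polynomial.coeff_reflect, Polynomial.revAt_le (Nat.zero_le N), Nat.sub_zero]
    exact Polynomial.coeff_eq_zero_of_degree_lt
      (by rwa [← Polynomial.degree_eq_natDegree hR0])
  obtain ⟨A, hA⟩ := Polynomial.X_dvd_iff.mpr hcoef
  refine ⟨A, R.reflect N, ?_, ?_⟩
  · rw [Polynomial.coeff_reflect, Polynomial.revAt_le (Nat.zero_le N), Nat.sub_zero]
    exact Polynomial.leadingCoeff_ne_zero.mpr hR0
  · rw [σ_div, ← E_eq N P hPN, ← E_eq N R le_rfl, hA, map_mul, RatFunc.algebraMap_X]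
    have h1 : (RatFunc.X : RatFunc ℂ) ≠ 0 := RatFunc.X_ne_zero
    have h2 : algebraMap (Polynomial ℂ) (RatFunc ℂ) (R.reflect N) ≠ 0 :=
      RatFunc.algebraMap_ne_zero (by rwa [Ne, Polynomial.reflect_eq_zero_iff])
    field_simp

end Stmt15Aux

open Stmt15Aux in
/-- Both halves of the polarization are isotropic for `Ω`:
(a) `Ω(f,g) = 0` whenever `f` and `g` are Laurent polynomials (here given by their
coefficients `c, d : ℤ →₀ ℂ`);
(b) `Ω(f,g) = 0` whenever `f` and `g` are rational functions regular at `X = 0` and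
vanishing at `X = ∞`, i.e. of the form `p/r` with `r(0) ≠ 0` and `deg p < deg r`. -/
theorem stmt15 :
    (∀ c d : ℤ →₀ ℂ,
        OmegaForm (∑ k ∈ c.support, RatFunc.C (c k) * RatFunc.X ^ k)
          (∑ k ∈ d.support, RatFunc.C (d k) * RatFunc.X ^ k) = 0) ∧
    (∀ p r p' r' : Polynomial ℂ, r.eval 0 ≠ 0 → r'.eval 0 ≠ 0 →
        p.degree < r.degree → p'.degree < r'.degree →
        OmegaForm
          (algebraMap (Polynomial ℂ) (RatFunc ℂ) p / algebraMap (Polynomial ℂ) (RatFunc ℂ) r)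
          (algebraMap (Polynomial ℂ) (RatFunc ℂ) p' / algebraMap (Polynomial ℂ) (RatFunc ℂ) r')
          = 0) := by
  constructor
  · intro c d
    simp only [Omega_eq, map_sum, σ_CX, Finset.sum_mul_sum, Finset.mul_sum, Finset.sum_mul,
      term_eq, map_sum, TMap_CX, Finset.sum_const_zero]
  · intro p r p' r' hr hr' hdeg hdeg'
    have hrne : r ≠ 0 := fun h => hr (by simp [h])
    have hBne : ∀ {B : Polynomial ℂ}, B.coeff 0 ≠ 0 → B ≠ 0 := fun h hB => h (by simp [hB])
    obtain ⟨A, B, hB, hσg⟩ := sigma_form p' r' hr' hdeg'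
    obtain ⟨A', B', hB', hσf⟩ := sigma_form p r hr hdeg
    rw [Omega_eq, TMap_apply]
    have hXne : (RatFunc.X : RatFunc ℂ) ≠ 0 := RatFunc.X_ne_zero
    have hrm : algebraMap (Polynomial ℂ) (RatFunc ℂ) r ≠ 0 := RatFunc.algebraMap_ne_zero hrne
    have hr'm : algebraMap (Polynomial ℂ) (RatFunc ℂ) r' ≠ 0 :=
      RatFunc.algebraMap_ne_zero (fun h => hr' (by simp [h]))
    have hBm : algebraMap (Polynomial ℂ) (RatFunc ℂ) B ≠ 0 :=
      RatFunc.algebraMap_ne_zero (hBne hB)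
    have hB'm : algebraMap (Polynomial ℂ) (RatFunc ℂ) B' ≠ 0 :=
      RatFunc.algebraMap_ne_zero (hBne hB')
    have e2 : σ (algebraMap (Polynomial ℂ) (RatFunc ℂ) p / algebraMap (Polynomial ℂ) (RatFunc ℂ) r *
        σ (algebraMap (Polynomial ℂ) (RatFunc ℂ) p' / algebraMap (Polynomial ℂ) (RatFunc ℂ) r') *
        (RatFunc.X⁻¹ : RatFunc ℂ)) =
        RatFunc.X * (algebraMap (Polynomial ℂ) (RatFunc ℂ) A' /
            algebraMap (Polynomial ℂ) (RatFunc ℂ) B') *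
          (algebraMap (Polynomial ℂ) (RatFunc ℂ) p' / algebraMap (Polynomial ℂ) (RatFunc ℂ) r') *
          RatFunc.X := by
      rw [map_mul, map_mul, σ_σ_div, map_inv₀, σ_X, inv_inv, hσf]
    rw [e2]
    have hzp : (RatFunc.X : RatFunc ℂ) ^ (-2 : ℤ) = (RatFunc.X * RatFunc.X)⁻¹ := by
      rw [zpow_neg, zpow_two]
    have e3 : (RatFunc.X : RatFunc ℂ) ^ (-2 : ℤ) *
        (RatFunc.X * (algebraMap (Polynomial ℂ) (RatFunc ℂ) A' /
            algebraMap (Polynomial ℂ) (RatFunc ℂ) B') *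
          (algebraMap (Polynomial ℂ) (RatFunc ℂ) p' / algebraMap (Polynomial ℂ) (RatFunc ℂ) r') *
          RatFunc.X) =
        algebraMap (Polynomial ℂ) (RatFunc ℂ) (A' * p') /
          algebraMap (Polynomial ℂ) (RatFunc ℂ) (B' * r') := by
      rw [hzp, map_mul, map_mul]
      field_simp
    have e1 : algebraMap (Polynomial ℂ) (RatFunc ℂ) p / algebraMap (Polynomial ℂ) (RatFunc ℂ) r *
        σ (algebraMap (Polynomial ℂ) (RatFunc ℂ) p' / algebraMap (Polynomial ℂ) (RatFunc ℂ) r') *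
        (RatFunc.X⁻¹ : RatFunc ℂ) =
        algebraMap (Polynomial ℂ) (RatFunc ℂ) (p * A) /
          algebraMap (Polynomial ℂ) (RatFunc ℂ) (r * B) := by
      rw [hσg, map_mul, map_mul]
      field_simp
    rw [e3, e1, resMap_div _ _ (by
        rw [Polynomial.mul_coeff_zero]
        exact mul_ne_zero (by rwa [Polynomial.coeff_zero_eq_eval_zero]) hB),
      resMap_div _ _ (by
        rw [Polynomial.mul_coeff_zero]
        exact mul_ne_zero hB' (by rwa [Polynomial.coeff_zero_eq_eval_zero])),
      sub_zero]
end
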